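/- Let φ : (−1,1) → ℝ be a C² solution of Lφ = 0 that is nonincreasing and strictly positive, and let K > 0. Define g(x) = V(x) − V(−x) where V(x) = Ṽ(x) − Kφ(x) and Ṽ(x) = 1/(2α) − x/(2(2λ+α)). Then g''(x) < 0 for all x ∈ (−1,0), and g''(x) > 0 for all x ∈ (0,1). -/

import Mathlib

open Set

/-- With `V = Ṽ − Kφ` (`K > 0`) and `g(x) = V(x) − V(−x)`, one has `g'' < 0` on
`(−1,0)` and `g'' > 0` on `(0,1)`. -/
theorem stmt9 (lam mu alp K : ℝ) (hlam : 0 < lam) (hmu : 0 < mu) (halp : 0 < alp)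
    (hK : 0 < K)
    (φ φ' φ'' : ℝ → ℝ)
    (hd1 : ∀ x ∈ Set.Ioo (-1 : ℝ) 1, HasDerivAt φ (φ' x) x)
    (hd2 : ∀ x ∈ Set.Ioo (-1 : ℝ) 1, HasDerivAt φ' (φ'' x) x)
    (hode : ∀ x ∈ Set.Ioo (-1 : ℝ) 1,
      mu ^ 2 / 2 * (1 - x ^ 2) ^ 2 * φ'' x - 2 * lam * x * φ' x - alp * φ x = 0)
    (hanti : AntitoneOn φ (Set.Ioo (-1 : ℝ) 1))
    (hpos : ∀ x ∈ Set.Ioo (-1 : ℝ) 1, 0 < φ x)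
    (g : ℝ → ℝ)
    (hg : g = fun x => ((1 / (2 * alp) - x / (2 * (2 * lam + alp))) - K * φ x)
      - ((1 / (2 * alp) - (-x) / (2 * (2 * lam + alp))) - K * φ (-x))) :
    (∀ x ∈ Set.Ioo (-1 : ℝ) 0, deriv (deriv g) x < 0)
      ∧ (∀ x ∈ Set.Ioo (0 : ℝ) 1, 0 < deriv (deriv g) x) := by
  have hneg : ∀ x ∈ Ioo (-1 : ℝ) 1, -x ∈ Ioo (-1 : ℝ) 1 := by
    intro x hx
    exact ⟨by linarith [hx.2], by linarith [hx.1]⟩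
  -- derivative of φ is nonpositive
  have hph : ∀ x ∈ Ioo (-1 : ℝ) 1, φ' x ≤ 0 := by
    intro x hx
    have hder : HasDerivWithinAt φ (φ' x) (Ioi x) x := (hd1 x hx).hasDerivWithinAt
    have htend := hasDerivWithinAt_iff_tendsto_slope.mp hder
    have hsub : Ioi x \ {x} = Ioi x := diff_singleton_eq_self (by simp)
    rw [hsub] at htend
    refine le_of_tendsto htend ?_
    filter_upwards [self_mem_nhdsWithin,
      eventually_nhdsWithin_of_eventually_nhds (eventually_lt_nhds hx.2)] with y hy hy1
    have hy' : y ∈ Ioo (-1 : ℝ) 1 := ⟨by linarith [hx.1, mem_Ioi.mp hy], hy1⟩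
    have hle : φ y ≤ φ x := hanti hx hy' (le_of_lt (mem_Ioi.mp hy))
    have hyx : 0 < y - x := by simpa using sub_pos.mpr (mem_Ioi.mp hy)
    rw [slope_def_field]
    exact div_nonpos_of_nonpos_of_nonneg (by linarith) (le_of_lt hyx)
  -- key lemma : φ''(-x) < φ''(x) for x ∈ (-1,0)
  have hkey : ∀ x ∈ Ioo (-1 : ℝ) 0, φ'' (-x) < φ'' x := by
    intro x hx
    have hx1 : x ∈ Ioo (-1 : ℝ) 1 := ⟨hx.1, by linarith [hx.2]⟩
    have hx2 : -x ∈ Ioo (-1 : ℝ) 1 := hneg x hx1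
    have h0 : (0 : ℝ) ∈ Ioo (-1 : ℝ) 1 := by norm_num
    -- strict inequality of values
    have hlt : φ (-x) < φ x := by
      rcases lt_or_eq_of_le (hanti hx1 hx2 (by linarith [hx.2])) with h | h
      · exact h
      -- equality case leads to contradiction
      exfalso
      have hconst : ∀ t ∈ Ioo x (-x), φ t = φ x := by
        intro t ht
        have ht' : t ∈ Ioo (-1 : ℝ) 1 := ⟨by linarith [ht.1, hx.1], by linarith [ht.2, hx2.2]⟩
        have h1 : φ t ≤ φ x := hanti hx1 ht' (le_of_lt ht.1)
        have h2 : φ (-x) ≤ φ t := hanti ht' hx2 (le_of_lt ht.2)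
        linarith [h.symm ▸ h2]
      have hmemI : ∀ t ∈ Ioo x (-x), Ioo x (-x) ∈ nhds t := fun t ht =>
        Ioo_mem_nhds ht.1 ht.2
      have hphi'zero : ∀ t ∈ Ioo x (-x), φ' t = 0 := by
        intro t ht
        have ht' : t ∈ Ioo (-1 : ℝ) 1 := ⟨by linarith [ht.1, hx.1], by linarith [ht.2, hx2.2]⟩
        have heq : φ =ᶠ[nhds t] fun _ => φ x := by
          filter_upwards [hmemI t ht] with y hy using hconst y hy
        have : HasDerivAt φ 0 t :=
          (hasDerivAt_const t (φ x)).congr_of_eventuallyEq heq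
        exact (hd1 t ht').unique this
      have h0m : (0 : ℝ) ∈ Ioo x (-x) := ⟨hx.2, by linarith [hx.2]⟩
      have hpp : φ'' 0 = 0 := by
        have heq : φ' =ᶠ[nhds (0 : ℝ)] fun _ => (0 : ℝ) := by
          filter_upwards [hmemI 0 h0m] with y hy using hphi'zero y hy
        have : HasDerivAt φ' 0 0 :=
          (hasDerivAt_const (0 : ℝ) (0 : ℝ)).congr_of_eventuallyEq heq
        exact (hd2 0 h0).unique this
      have hode0 := hode 0 h0
      have hz := hphi'zero 0 h0m
      have := hpos 0 h0
      rw [hpp, hz] at hode0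
      simp at hode0
      rcases hode0 with h | h <;> linarith
    -- combine with the ODE
    have hD : (0 : ℝ) < mu ^ 2 / 2 * (1 - x ^ 2) ^ 2 := by
      have h1 : 0 < 1 - x ^ 2 := by nlinarith [hx1.1, hx1.2]
      positivity
    have hA : 0 ≤ 2 * lam * x * (φ' x + φ' (-x)) := by
      have h1 : φ' x + φ' (-x) ≤ 0 := by linarith [hph x hx1, hph (-x) hx2]
      have h2 : 2 * lam * x ≤ 0 := by nlinarith [hx.2]
      nlinarith [mul_nonneg (neg_nonneg.mpr h2) (neg_nonneg.mpr h1)]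
    have he1 := hode x hx1
    have he2 := hode (-x) hx2
    nlinarith [he1, he2, hD, hA, hlt, mul_pos hD (sub_pos.mpr hlt)]
  -- compute second derivative of g
  have hg2 : ∀ x ∈ Ioo (-1 : ℝ) 1,
      deriv (deriv g) x = K * (φ'' (-x) - φ'' x) := by
    intro x hx
    have hG1 : ∀ y ∈ Ioo (-1 : ℝ) 1,
        HasDerivAt g (-(1 / (2 * lam + alp)) - K * φ' y - K * φ' (-y)) y := by
      intro y hy
      have h1 : HasDerivAt φ (φ' y) y := hd1 y hy
      have h2 : HasDerivAt (fun z => φ (-z)) (φ' (-y) * (-1)) y :=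
        (hd1 (-y) (hneg y hy)).comp y (hasDerivAt_neg y)
      have h3 : HasDerivAt (fun z : ℝ => z / (2 * (2 * lam + alp)))
          (1 / (2 * (2 * lam + alp))) y := by
        simpa using (hasDerivAt_id y).div_const (2 * (2 * lam + alp))
      have h4 : HasDerivAt (fun z : ℝ => (-z) / (2 * (2 * lam + alp)))
          (-1 / (2 * (2 * lam + alp))) y := by
        simpa using ((hasDerivAt_neg y)).div_const (2 * (2 * lam + alp))
      rw [hg]
      have := ((((hasDerivAt_const y (1 / (2 * alp))).sub h3).sub (h1.const_mul K)).sub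
        (((hasDerivAt_const y (1 / (2 * alp))).sub h4).sub (h2.const_mul K)))
      refine this.congr_deriv ?_
      have hne : (2 * lam + alp) ≠ 0 := by positivity
      field_simp
      ring
    have hG2 : HasDerivAt (fun y => -(1 / (2 * lam + alp)) - K * φ' y - K * φ' (-y))
        (-(K * φ'' x) - K * (φ'' (-x) * (-1))) x := by
      have h1 : HasDerivAt φ' (φ'' x) x := hd2 x hx
      have h2 : HasDerivAt (fun z => φ' (-z)) (φ'' (-x) * (-1)) x :=
        (hd2 (-x) (hneg x hx)).comp x (hasDerivAt_neg x)
      exact (((hasDerivAt_const x (-(1 / (2 * lam + alp)))).sub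
        (h1.const_mul K)).sub (h2.const_mul K)).congr_deriv (by ring)
    have heq : deriv g =ᶠ[nhds x]
        fun y => -(1 / (2 * lam + alp)) - K * φ' y - K * φ' (-y) := by
      filter_upwards [Ioo_mem_nhds hx.1 hx.2] with y hy using (hG1 y hy).deriv
    rw [Filter.EventuallyEq.deriv_eq heq, hG2.deriv]
    ring
  constructor
  · intro x hx
    have hx1 : x ∈ Ioo (-1 : ℝ) 1 := ⟨hx.1, by linarith [hx.2]⟩
    rw [hg2 x hx1]
    have := hkey x hx
    nlinarith
  · intro x hx
    have hx1 : x ∈ Ioo (-1 : ℝ) 1 := ⟨by linarith [hx.1], hx.2⟩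
    rw [hg2 x hx1]
    have hmx : -x ∈ Ioo (-1 : ℝ) 0 := ⟨by linarith [hx.2], by linarith [hx.1]⟩
    have := hkey (-x) hmx
    rw [neg_neg] at this
    nlinarith
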